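/- Let N, m be natural numbers, let F be a field satisfying ringChar F = 0 or 63 ≤ ringChar F, and let Cl : Fin m → Fin 3 → (Fin N × Bool) encode a 3-CNF formula in which the three variables of each clause are pairwise distinct. If a finset S : Finset I satisfies φ_2(S) = t, then: (i) Sum.inl 0 ∈ S and Sum.inl 1 ∈ S; (ii) for every i : Fin N, exactly one of the two memberships Sum.inr (Sum.inl (i, true)) ∈ S and Sum.inr (Sum.inl (i, false)) ∈ S holds; and (iii) for every j : Fin m there exists k : Fin 3 with Sum.inr (Sum.inl (Cl j k)) ∈ S. -/

import Mathlib

open Finset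

/-- The first coordinate of the Subset-φ instance. -/
def coord0 (N m : ℕ) : Fin (1 + N + m) := ⟨0, by omega⟩

/-- The coordinate of variable `x_i`. -/
def coordVar (N m : ℕ) (i : Fin N) : Fin (1 + N + m) :=
  ⟨1 + i.val, by have := i.isLt; omega⟩

/-- The coordinate of clause `C_j`. -/
def coordCl (N m : ℕ) (j : Fin m) : Fin (1 + N + m) :=
  ⟨1 + N + j.val, by have := j.isLt; omega⟩

/-- The elements of the Subset-`φ_2` instance constructed from a 3-CNF formula `Cl`. -/
def subsetPhi2Elem (F : Type*) [Field F] (N m : ℕ)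
    (Cl : Fin m → Fin 3 → (Fin N × Bool)) :
    (Fin 2 ⊕ ((Fin N × Bool) ⊕ (Fin m × Fin 3))) → Fin (1 + N + m) → F
  | Sum.inl k, c =>
      if c = coord0 N m then 1
      else if k.val ≠ 0 ∧ ∃ i : Fin N, c = coordVar N m i then 1
      else 0
  | Sum.inr (Sum.inl (i, b)), c =>
      if c = coordVar N m i then 1
      else if ∃ j : Fin m, c = coordCl N m j ∧ ∃ k : Fin 3, Cl j k = (i, b) then 1
      else 0
  | Sum.inr (Sum.inr (j, k)), c =>
      if c = coordCl N m j then
        (if k.val = 0 then (9 : F) else if k.val = 1 then (4 : F) else (2 : F))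
      else 0

/-- The target vector of the Subset-`φ_2` instance: value 1 at coordinate 0 and at
every variable coordinate, and value 9 at every clause coordinate. -/
def subsetPhi2Target (F : Type*) [Field F] (N m : ℕ) : Fin (1 + N + m) → F :=
  fun c => if ∃ j : Fin m, c = coordCl N m j then (9 : F) else 1

lemma two_mul_esymm2 {α : Type*} [DecidableEq α] {F : Type*} [CommRing F]
    (S : Finset α) (f : α → F) :
    2 * ∑ T ∈ S.powersetCard 2, ∏ e ∈ T, f e =
      (∑ e ∈ S, f e) ^ 2 - ∑ e ∈ S, (f e) ^ 2 := by
  induction S using Finset.induction with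
  | empty => rw [Finset.powersetCard_eq_empty.2 (by simp)]; simp
  | @insert a s hx ih =>
    have hdisj : Disjoint (s.powersetCard 2) ((s.powersetCard 1).image (insert a)) := by
      rw [Finset.disjoint_right]
      intro T hT hT2
      simp only [Finset.mem_image] at hT
      obtain ⟨U, hU, rfl⟩ := hT
      rw [Finset.mem_powersetCard] at hT2
      exact hx (hT2.1 (Finset.mem_insert_self a U))
    have hins : (insert a s).powersetCard 2 =
        s.powersetCard 2 ∪ (s.powersetCard 1).image (insert a) :=
      Finset.powersetCard_succ_insert hx 1
    rw [hins, Finset.sum_union hdisj, Finset.sum_image ?_, Finset.sum_insert hx,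
      Finset.sum_insert hx]
    · have hprod : ∀ U ∈ s.powersetCard 1, ∏ e ∈ insert a U, f e = f a * ∏ e ∈ U, f e := by
        intro U hU
        rw [Finset.mem_powersetCard] at hU
        exact Finset.prod_insert (fun h => hx (hU.1 h))
      rw [Finset.sum_congr rfl hprod, ← Finset.mul_sum]
      have h1 : ∑ U ∈ s.powersetCard 1, ∏ e ∈ U, f e = ∑ e ∈ s, f e := by
        rw [Finset.powersetCard_one, Finset.sum_map]
        simp
      rw [h1]
      linear_combination ih
    · intro U hU V hV h
      rw [Finset.mem_coe, Finset.mem_powersetCard] at hU hV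
      have ha : a ∉ U := fun h' => hx (hU.1 h')
      have hb : a ∉ V := fun h' => hx (hV.1 h')
      rw [← Finset.erase_insert ha, h, Finset.erase_insert hb]

lemma sum_eq_support' {α F : Type*} [DecidableEq α] [AddCommMonoid F]
    (S D : Finset α) (g : α → F) (h : ∀ e ∉ D, g e = 0) :
    ∑ e ∈ S, g e = ∑ d ∈ D, if d ∈ S then g d else 0 := by
  rw [← Finset.sum_filter, Finset.filter_mem_eq_inter, Finset.inter_comm]
  exact (Finset.sum_subset Finset.inter_subset_left
    (fun x hx hx2 => h x (fun hd => hx2 (Finset.mem_inter.2 ⟨hx, hd⟩)))).symm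
section Eval
variable {F : Type*} [Field F] {N m : ℕ} (Cl : Fin m → Fin 3 → (Fin N × Bool))

lemma coord0_ne_coordVar (i : Fin N) : coord0 N m ≠ coordVar N m i := by
  simp only [coord0, coordVar, ne_eq, Fin.mk.injEq]; omega

lemma coord0_ne_coordCl (j : Fin m) : coord0 N m ≠ coordCl N m j := by
  simp only [coord0, coordCl, ne_eq, Fin.mk.injEq]; omega

lemma coordVar_ne_coordCl (i : Fin N) (j : Fin m) : coordVar N m i ≠ coordCl N m j := by
  simp only [coordVar, coordCl, ne_eq, Fin.mk.injEq]; have := i.isLt; omega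

lemma coordVar_inj {i i' : Fin N} : coordVar N m i = coordVar N m i' ↔ i = i' := by
  simp only [coordVar, Fin.mk.injEq, Fin.ext_iff]; omega

lemma coordCl_inj {j j' : Fin m} : coordCl N m j = coordCl N m j' ↔ j = j' := by
  simp only [coordCl, Fin.mk.injEq, Fin.ext_iff]; omega

lemma eval_inl_coord0 (k : Fin 2) :
    subsetPhi2Elem F N m Cl (Sum.inl k) (coord0 N m) = 1 := by
  simp [subsetPhi2Elem]

lemma eval_lit_coord0 (i : Fin N) (b : Bool) :
    subsetPhi2Elem F N m Cl (Sum.inr (Sum.inl (i, b))) (coord0 N m) = 0 := by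
  simp [subsetPhi2Elem, coord0_ne_coordVar, coord0_ne_coordCl]

lemma eval_gad_coord0 (j : Fin m) (k : Fin 3) :
    subsetPhi2Elem F N m Cl (Sum.inr (Sum.inr (j, k))) (coord0 N m) = 0 := by
  simp [subsetPhi2Elem, coord0_ne_coordCl]

lemma eval_inl_coordVar (k : Fin 2) (i : Fin N) :
    subsetPhi2Elem F N m Cl (Sum.inl k) (coordVar N m i) =
      if k.val = 0 then 0 else 1 := by
  simp only [subsetPhi2Elem, if_neg (Ne.symm (coord0_ne_coordVar i))]
  by_cases hk : k.val = 0 <;> simp [hk]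

lemma eval_lit_coordVar (i' i : Fin N) (b : Bool) :
    subsetPhi2Elem F N m Cl (Sum.inr (Sum.inl (i', b))) (coordVar N m i) =
      if i' = i then 1 else 0 := by
  have h2 : ¬ ∃ j : Fin m, coordVar N m i = coordCl N m j ∧ ∃ k : Fin 3, Cl j k = (i', b) :=
    fun ⟨j, hj, _⟩ => coordVar_ne_coordCl i j hj
  simp only [subsetPhi2Elem, coordVar_inj]
  rw [if_neg h2]
  by_cases h : i = i'
  · rw [if_pos h, if_pos h.symm]
  · rw [if_neg h, if_neg (fun hh => h hh.symm)]

lemma eval_gad_coordVar (i : Fin N) (p : Fin m × Fin 3) :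
    subsetPhi2Elem F N m Cl (Sum.inr (Sum.inr p)) (coordVar N m i) = 0 := by
  obtain ⟨j, k⟩ := p
  simp [subsetPhi2Elem, coordVar_ne_coordCl]

lemma eval_inl_coordCl (k : Fin 2) (j : Fin m) :
    subsetPhi2Elem F N m Cl (Sum.inl k) (coordCl N m j) = 0 := by
  have : ∀ i : Fin N, coordCl N m j ≠ coordVar N m i :=
    fun i => Ne.symm (coordVar_ne_coordCl i j)
  simp [subsetPhi2Elem, Ne.symm (coord0_ne_coordCl j), this]

lemma eval_lit_coordCl (i : Fin N) (b : Bool) (j : Fin m) :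
    subsetPhi2Elem F N m Cl (Sum.inr (Sum.inl (i, b))) (coordCl N m j) =
      if ∃ k : Fin 3, Cl j k = (i, b) then 1 else 0 := by
  have h1 : coordCl N m j ≠ coordVar N m i := Ne.symm (coordVar_ne_coordCl i j)
  simp [subsetPhi2Elem, h1, coordCl_inj]

lemma eval_gad_coordCl (j' j : Fin m) (k : Fin 3) :
    subsetPhi2Elem F N m Cl (Sum.inr (Sum.inr (j', k))) (coordCl N m j) =
      if j' = j then (if k.val = 0 then 9 else if k.val = 1 then 4 else 2) else 0 := by
  by_cases h : j' = j
  · subst h; simp [subsetPhi2Elem]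
  · have h2 : ¬ coordCl N m j = coordCl N m j' := fun hh => h (coordCl_inj.mp hh).symm
    simp [subsetPhi2Elem, h2, h]

lemma target_coord0 : subsetPhi2Target F N m (coord0 N m) = 1 := by
  simp [subsetPhi2Target, coord0_ne_coordCl]

lemma target_coordVar (i : Fin N) : subsetPhi2Target F N m (coordVar N m i) = 1 := by
  simp [subsetPhi2Target, coordVar_ne_coordCl]

lemma target_coordCl (j : Fin m) : subsetPhi2Target F N m (coordCl N m j) = 9 := by
  simp only [subsetPhi2Target]
  rw [if_pos ⟨j, rfl⟩]

end Eval

/-- Soundness of the Subset-`φ_2` reduction (`char F = 0` or `≥ 63`): any subset `S`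
whose second elementary symmetric polynomial equals the target vector must contain
both special elements `α_0, α_1`, exactly one literal element per variable, and at
least one literal element of every clause. -/
theorem subsetPhi_two_soundness (N m : ℕ) (F : Type*) [Field F]
    (hchar : ringChar F = 0 ∨ 63 ≤ ringChar F)
    (Cl : Fin m → Fin 3 → (Fin N × Bool))
    (hdist : ∀ j : Fin m, ∀ k₁ k₂ : Fin 3, k₁ ≠ k₂ → (Cl j k₁).1 ≠ (Cl j k₂).1)
    (S : Finset (Fin 2 ⊕ ((Fin N × Bool) ⊕ (Fin m × Fin 3))))
    (hS : ∀ c : Fin (1 + N + m),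
      ∑ T ∈ S.powersetCard 2, ∏ e ∈ T, subsetPhi2Elem F N m Cl e c =
        subsetPhi2Target F N m c) :
    (Sum.inl 0 ∈ S ∧ Sum.inl 1 ∈ S) ∧
    (∀ i : Fin N,
      Xor' (Sum.inr (Sum.inl (i, true)) ∈ S) (Sum.inr (Sum.inl (i, false)) ∈ S)) ∧
    (∀ j : Fin m, ∃ k : Fin 3, Sum.inr (Sum.inl (Cl j k)) ∈ S) := by
  classical
  haveI := ringChar.charP F
  have hk2 : ∀ k : Fin 2, k = 0 ∨ k = 1 := by decide
  have hk3 : ∀ k : Fin 3, k = 0 ∨ k = 1 ∨ k = 2 := by decide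
  have hne : ∀ n : ℕ, 0 < n → n < 63 → (n : F) ≠ 0 := by
    intro n hn hn' h
    have hd := (CharP.cast_eq_zero_iff F (ringChar F) n).1 h
    rcases hchar with h0 | h63
    · rw [h0] at hd
      exact absurd (Nat.eq_zero_of_zero_dvd hd) (by omega)
    · exact absurd (Nat.le_of_dvd hn hd) (by omega)
  have hn2 : (2 : F) ≠ 0 := by exact_mod_cast hne 2 (by norm_num) (by norm_num)
  have hn4 : (4 : F) ≠ 0 := by exact_mod_cast hne 4 (by norm_num) (by norm_num)
  have hn18 : (18 : F) ≠ 0 := by exact_mod_cast hne 18 (by norm_num) (by norm_num)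
  have hn54 : (54 : F) ≠ 0 := by exact_mod_cast hne 54 (by norm_num) (by norm_num)
  have hn106 : (106 : F) ≠ 0 := by
    intro h
    have hd := (CharP.cast_eq_zero_iff F (ringChar F) 106).1 (by exact_mod_cast h)
    rcases hchar with h0 | h63
    · rw [h0] at hd
      exact absurd (Nat.eq_zero_of_zero_dvd hd) (by norm_num)
    · rcases CharP.char_is_prime_or_zero F (ringChar F) with hp | h0
      · have hdvd : ringChar F ∣ 2 * 53 := by norm_num at hd ⊢; exact hd
        rcases (Nat.Prime.dvd_mul hp).1 hdvd with h2 | h53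
        · have := Nat.le_of_dvd (by norm_num) h2; omega
        · have := Nat.le_of_dvd (by norm_num) h53; omega
      · omega
  have key : ∀ c, (∑ e ∈ S, subsetPhi2Elem F N m Cl e c) ^ 2
      - ∑ e ∈ S, (subsetPhi2Elem F N m Cl e c) ^ 2 = 2 * subsetPhi2Target F N m c := by
    intro c
    have h2 := two_mul_esymm2 S (fun e => subsetPhi2Elem F N m Cl e c)
    rw [← h2, hS c]
  -- Part (i)
  have hboth : Sum.inl 0 ∈ S ∧ Sum.inl 1 ∈ S := by
    have hz0 : ∀ e ∉ ({Sum.inl 0, Sum.inl 1} :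
        Finset (Fin 2 ⊕ ((Fin N × Bool) ⊕ (Fin m × Fin 3)))),
        subsetPhi2Elem F N m Cl e (coord0 N m) = 0 := by
      rintro (k | (⟨i, b⟩ | ⟨j, k⟩)) he
      · rcases hk2 k with rfl | rfl <;> simp at he
      · exact eval_lit_coord0 Cl i b
      · exact eval_gad_coord0 Cl j k
    have hz0' : ∀ e ∉ ({Sum.inl 0, Sum.inl 1} :
        Finset (Fin 2 ⊕ ((Fin N × Bool) ⊕ (Fin m × Fin 3)))),
        (subsetPhi2Elem F N m Cl e (coord0 N m)) ^ 2 = 0 :=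
      fun e he => by rw [hz0 e he]; ring
    have hA : ∑ e ∈ S, subsetPhi2Elem F N m Cl e (coord0 N m)
        = (if Sum.inl 0 ∈ S then 1 else 0) + (if Sum.inl 1 ∈ S then 1 else 0) := by
      rw [sum_eq_support' S _ _ hz0, Finset.sum_pair (by simp)]
      simp [eval_inl_coord0]
    have hB : ∑ e ∈ S, (subsetPhi2Elem F N m Cl e (coord0 N m)) ^ 2
        = (if Sum.inl 0 ∈ S then 1 else 0) + (if Sum.inl 1 ∈ S then 1 else 0) := by
      rw [sum_eq_support' S _ _ hz0', Finset.sum_pair (by simp)]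
      simp [eval_inl_coord0]
    have h := key (coord0 N m)
    rw [hA, hB, target_coord0] at h
    by_cases e0 : Sum.inl 0 ∈ S <;> by_cases e1 : Sum.inl 1 ∈ S
    · exact ⟨e0, e1⟩
    · exfalso; rw [if_pos e0, if_neg e1] at h
      exact hn2 (by linear_combination -h)
    · exfalso; rw [if_neg e0, if_pos e1] at h
      exact hn2 (by linear_combination -h)
    · exfalso; rw [if_neg e0, if_neg e1] at h
      exact hn2 (by linear_combination -h)
  refine ⟨hboth, ?_, ?_⟩
  -- Part (ii)
  · intro i
    have hz : ∀ e ∉ ({Sum.inl 1, Sum.inr (Sum.inl (i, true)),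
        Sum.inr (Sum.inl (i, false))} :
        Finset (Fin 2 ⊕ ((Fin N × Bool) ⊕ (Fin m × Fin 3)))),
        subsetPhi2Elem F N m Cl e (coordVar N m i) = 0 := by
      rintro (k | (⟨i', b⟩ | ⟨j, k⟩)) he
      · rcases hk2 k with rfl | rfl
        · rw [eval_inl_coordVar]; simp
        · exact absurd (by simp) he
      · rw [eval_lit_coordVar, if_neg]
        rintro rfl
        apply he
        cases b <;> simp
      · exact eval_gad_coordVar Cl i (j, k)
    have hz' : ∀ e ∉ ({Sum.inl 1, Sum.inr (Sum.inl (i, true)),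
        Sum.inr (Sum.inl (i, false))} :
        Finset (Fin 2 ⊕ ((Fin N × Bool) ⊕ (Fin m × Fin 3)))),
        (subsetPhi2Elem F N m Cl e (coordVar N m i)) ^ 2 = 0 :=
      fun e he => by rw [hz e he]; ring
    have hd1 : (Sum.inl 1 : Fin 2 ⊕ ((Fin N × Bool) ⊕ (Fin m × Fin 3))) ∉
        ({Sum.inr (Sum.inl (i, true)), Sum.inr (Sum.inl (i, false))} :
        Finset (Fin 2 ⊕ ((Fin N × Bool) ⊕ (Fin m × Fin 3)))) := by simp
    have hd2 : (Sum.inr (Sum.inl (i, true)) :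
        Fin 2 ⊕ ((Fin N × Bool) ⊕ (Fin m × Fin 3))) ≠
        Sum.inr (Sum.inl (i, false)) := by simp
    have hA : ∑ e ∈ S, subsetPhi2Elem F N m Cl e (coordVar N m i)
        = (if Sum.inl 1 ∈ S then 1 else 0)
          + ((if Sum.inr (Sum.inl (i, true)) ∈ S then 1 else 0)
          + (if Sum.inr (Sum.inl (i, false)) ∈ S then 1 else 0)) := by
      rw [sum_eq_support' S _ _ hz, Finset.sum_insert hd1, Finset.sum_pair hd2]
      simp [eval_inl_coordVar, eval_lit_coordVar]
    have hB : ∑ e ∈ S, (subsetPhi2Elem F N m Cl e (coordVar N m i)) ^ 2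
        = (if Sum.inl 1 ∈ S then 1 else 0)
          + ((if Sum.inr (Sum.inl (i, true)) ∈ S then 1 else 0)
          + (if Sum.inr (Sum.inl (i, false)) ∈ S then 1 else 0)) := by
      rw [sum_eq_support' S _ _ hz', Finset.sum_insert hd1, Finset.sum_pair hd2]
      simp [eval_inl_coordVar, eval_lit_coordVar]
    have h := key (coordVar N m i)
    rw [hA, hB, target_coordVar, if_pos hboth.2] at h
    by_cases hT : Sum.inr (Sum.inl (i, true)) ∈ S <;>
      by_cases hF : Sum.inr (Sum.inl (i, false)) ∈ S
    · exfalso; rw [if_pos hT, if_pos hF] at h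
      exact hn4 (by linear_combination h)
    · exact Or.inl ⟨hT, hF⟩
    · exact Or.inr ⟨hF, hT⟩
    · exfalso; rw [if_neg hT, if_neg hF] at h
      exact hn2 (by linear_combination -h)
  -- Part (iii)
  · intro j
    by_contra hno
    push_neg at hno
    have h01 : Cl j 0 ≠ Cl j 1 := fun h => hdist j 0 1 (by decide) (by rw [h])
    have h02 : Cl j 0 ≠ Cl j 2 := fun h => hdist j 0 2 (by decide) (by rw [h])
    have h12 : Cl j 1 ≠ Cl j 2 := fun h => hdist j 1 2 (by decide) (by rw [h])
    have hz : ∀ e ∉ ({Sum.inr (Sum.inl (Cl j 0)), Sum.inr (Sum.inl (Cl j 1)),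
        Sum.inr (Sum.inl (Cl j 2)), Sum.inr (Sum.inr (j, 0)),
        Sum.inr (Sum.inr (j, 1)), Sum.inr (Sum.inr (j, 2))} :
        Finset (Fin 2 ⊕ ((Fin N × Bool) ⊕ (Fin m × Fin 3)))),
        subsetPhi2Elem F N m Cl e (coordCl N m j) = 0 := by
      rintro (k | (⟨i, b⟩ | ⟨j', k⟩)) he
      · exact eval_inl_coordCl Cl k j
      · rw [eval_lit_coordCl, if_neg]
        rintro ⟨k, hk⟩
        apply he
        have hib : ((i, b) : Fin N × Bool) = Cl j k := hk.symm
        rw [hib]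
        rcases hk3 k with rfl | rfl | rfl <;> simp
      · rw [eval_gad_coordCl, if_neg]
        rintro rfl
        apply he
        rcases hk3 k with rfl | rfl | rfl <;> simp
    have hz' : ∀ e ∉ ({Sum.inr (Sum.inl (Cl j 0)), Sum.inr (Sum.inl (Cl j 1)),
        Sum.inr (Sum.inl (Cl j 2)), Sum.inr (Sum.inr (j, 0)),
        Sum.inr (Sum.inr (j, 1)), Sum.inr (Sum.inr (j, 2))} :
        Finset (Fin 2 ⊕ ((Fin N × Bool) ⊕ (Fin m × Fin 3)))),
        (subsetPhi2Elem F N m Cl e (coordCl N m j)) ^ 2 = 0 :=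
      fun e he => by rw [hz e he]; ring
    have hm1 : (Sum.inr (Sum.inl (Cl j 0)) :
        Fin 2 ⊕ ((Fin N × Bool) ⊕ (Fin m × Fin 3))) ∉
        ({Sum.inr (Sum.inl (Cl j 1)), Sum.inr (Sum.inl (Cl j 2)),
        Sum.inr (Sum.inr (j, 0)), Sum.inr (Sum.inr (j, 1)),
        Sum.inr (Sum.inr (j, 2))} :
        Finset (Fin 2 ⊕ ((Fin N × Bool) ⊕ (Fin m × Fin 3)))) := by
      simp [h01, h02]
    have hm2 : (Sum.inr (Sum.inl (Cl j 1)) :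
        Fin 2 ⊕ ((Fin N × Bool) ⊕ (Fin m × Fin 3))) ∉
        ({Sum.inr (Sum.inl (Cl j 2)), Sum.inr (Sum.inr (j, 0)),
        Sum.inr (Sum.inr (j, 1)), Sum.inr (Sum.inr (j, 2))} :
        Finset (Fin 2 ⊕ ((Fin N × Bool) ⊕ (Fin m × Fin 3)))) := by
      simp [h12]
    have hm3 : (Sum.inr (Sum.inl (Cl j 2)) :
        Fin 2 ⊕ ((Fin N × Bool) ⊕ (Fin m × Fin 3))) ∉
        ({Sum.inr (Sum.inr (j, 0)), Sum.inr (Sum.inr (j, 1)),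
        Sum.inr (Sum.inr (j, 2))} :
        Finset (Fin 2 ⊕ ((Fin N × Bool) ⊕ (Fin m × Fin 3)))) := by simp
    have hm4 : (Sum.inr (Sum.inr (j, 0)) :
        Fin 2 ⊕ ((Fin N × Bool) ⊕ (Fin m × Fin 3))) ∉
        ({Sum.inr (Sum.inr (j, 1)), Sum.inr (Sum.inr (j, 2))} :
        Finset (Fin 2 ⊕ ((Fin N × Bool) ⊕ (Fin m × Fin 3)))) := by simp
    have hm5 : (Sum.inr (Sum.inr (j, 1)) :
        Fin 2 ⊕ ((Fin N × Bool) ⊕ (Fin m × Fin 3))) ≠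
        Sum.inr (Sum.inr (j, 2)) := by simp
    have hval : ∀ k : Fin 3,
        subsetPhi2Elem F N m Cl (Sum.inr (Sum.inl (Cl j k))) (coordCl N m j) = 1 := by
      intro k
      rw [show Cl j k = ((Cl j k).1, (Cl j k).2) from rfl, eval_lit_coordCl,
        if_pos ⟨k, rfl⟩]
    have hA : ∑ e ∈ S, subsetPhi2Elem F N m Cl e (coordCl N m j)
        = (if Sum.inr (Sum.inl (Cl j 0)) ∈ S then (1 : F) else 0)
          + ((if Sum.inr (Sum.inl (Cl j 1)) ∈ S then 1 else 0)
          + ((if Sum.inr (Sum.inl (Cl j 2)) ∈ S then 1 else 0)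
          + ((if Sum.inr (Sum.inr (j, 0)) ∈ S then 9 else 0)
          + ((if Sum.inr (Sum.inr (j, 1)) ∈ S then 4 else 0)
          + (if Sum.inr (Sum.inr (j, 2)) ∈ S then 2 else 0))))) := by
      rw [sum_eq_support' S _ _ hz, Finset.sum_insert hm1, Finset.sum_insert hm2,
        Finset.sum_insert hm3, Finset.sum_insert hm4, Finset.sum_pair hm5]
      simp [hval, eval_gad_coordCl]
    have hB : ∑ e ∈ S, (subsetPhi2Elem F N m Cl e (coordCl N m j)) ^ 2
        = (if Sum.inr (Sum.inl (Cl j 0)) ∈ S then (1 : F) else 0)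
          + ((if Sum.inr (Sum.inl (Cl j 1)) ∈ S then 1 else 0)
          + ((if Sum.inr (Sum.inl (Cl j 2)) ∈ S then 1 else 0)
          + ((if Sum.inr (Sum.inr (j, 0)) ∈ S then 81 else 0)
          + ((if Sum.inr (Sum.inr (j, 1)) ∈ S then 16 else 0)
          + (if Sum.inr (Sum.inr (j, 2)) ∈ S then 4 else 0))))) := by
      rw [sum_eq_support' S _ _ hz', Finset.sum_insert hm1, Finset.sum_insert hm2,
        Finset.sum_insert hm3, Finset.sum_insert hm4, Finset.sum_pair hm5]
      simp [hval, eval_gad_coordCl]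
      norm_num
    have h := key (coordCl N m j)
    rw [hA, hB, target_coordCl, if_neg (hno 0), if_neg (hno 1), if_neg (hno 2)] at h
    by_cases g0 : Sum.inr (Sum.inr (j, 0)) ∈ S <;>
      by_cases g1 : Sum.inr (Sum.inr (j, 1)) ∈ S <;>
      by_cases g2 : Sum.inr (Sum.inr (j, 2)) ∈ S
    · rw [if_pos g0, if_pos g1, if_pos g2, if_pos g0, if_pos g1, if_pos g2] at h
      exact hn106 (by linear_combination h)
    · rw [if_pos g0, if_pos g1, if_neg g2, if_pos g0, if_pos g1, if_neg g2] at h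
      exact hn54 (by linear_combination h)
    · rw [if_pos g0, if_neg g1, if_pos g2, if_pos g0, if_neg g1, if_pos g2] at h
      exact hn18 (by linear_combination h)
    · rw [if_pos g0, if_neg g1, if_neg g2, if_pos g0, if_neg g1, if_neg g2] at h
      exact hn18 (by linear_combination -h)
    · rw [if_neg g0, if_pos g1, if_pos g2, if_neg g0, if_pos g1, if_pos g2] at h
      exact hn2 (by linear_combination -h)
    · rw [if_neg g0, if_pos g1, if_neg g2, if_neg g0, if_pos g1, if_neg g2] at h
      exact hn18 (by linear_combination -h)
    · rw [if_neg g0, if_neg g1, if_pos g2, if_neg g0, if_neg g1, if_pos g2] at h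
      exact hn18 (by linear_combination -h)
    · rw [if_neg g0, if_neg g1, if_neg g2, if_neg g0, if_neg g1, if_neg g2] at h
      exact hn18 (by linear_combination -h)
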